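/- For the cone of the semiorder arrangement in ℂ^{ℓ+1} (ℓ ≥ 2), consisting of {x₀=0} and {x_i - x_j + x₀ = 0}, {x_i - x_j - x₀ = 0} for 1 ≤ i < j ≤ ℓ: a triple of hyperplanes has linearly dependent defining forms if and only if it is of the form {x₀ = 0}, {x_i - x_j + x₀ = 0}, {x_i - x_j - x₀ = 0} for some i < j. In particular there are exactly C(ℓ,2) dependent triples. -/

import Mathlib

/-- The coefficient vector of the linear form `x_i - x_j + x₀` on `ℂ^{ℓ+1}`. -/
def formPlus (ℓ : ℕ) (i j : Fin (ℓ + 1)) : Fin (ℓ + 1) → ℂ :=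
  Pi.single i 1 - Pi.single j 1 + Pi.single 0 1

/-- The coefficient vector of the linear form `x_i - x_j - x₀` on `ℂ^{ℓ+1}`. -/
def formMinus (ℓ : ℕ) (i j : Fin (ℓ + 1)) : Fin (ℓ + 1) → ℂ :=
  Pi.single i 1 - Pi.single j 1 - Pi.single 0 1

/-- The coefficient vector of the linear form `x₀`. -/
def coneForm (ℓ : ℕ) : Fin (ℓ + 1) → ℂ := Pi.single 0 1

/-- The defining forms of the cone of the semiorder arrangement. -/
def coneSemiorderForms (ℓ : ℕ) : Set (Fin (ℓ + 1) → ℂ) :=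
  {f | f = coneForm ℓ ∨
    ∃ i j : Fin (ℓ + 1), 0 < i ∧ i < j ∧ (f = formPlus ℓ i j ∨ f = formMinus ℓ i j)}

namespace CSA
variable {ℓ : ℕ}

def eform (ℓ : ℕ) (i j : Fin (ℓ+1)) (ε : ℂ) : Fin (ℓ + 1) → ℂ :=
  fun k => (if k = i then 1 else 0) - (if k = j then 1 else 0) + (if k = 0 then ε else 0)

lemma formPlus_eq (i j : Fin (ℓ+1)) : formPlus ℓ i j = eform ℓ i j 1 := by
  funext k; simp [formPlus, eform, Pi.single_apply]
lemma formMinus_eq (i j : Fin (ℓ+1)) : formMinus ℓ i j = eform ℓ i j (-1) := by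
  funext k; by_cases h : k = 0 <;> simp [formMinus, eform, Pi.single_apply, sub_eq_add_neg, h]

lemma coneForm_apply (k : Fin (ℓ+1)) : coneForm ℓ k = if k = 0 then 1 else 0 := by
  simp [coneForm, Pi.single_apply]

variable {i j i' j' : Fin (ℓ+1)} {ε ε' : ℂ}

lemma coneForm_zero : coneForm ℓ 0 = 1 := by simp [coneForm_apply]
lemma coneForm_ne {k : Fin (ℓ+1)} (hk : k ≠ 0) : coneForm ℓ k = 0 := by simp [coneForm_apply, hk]

lemma eform_zero (hi : 0 < i) (hij : i < j) : eform ℓ i j ε 0 = ε := by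
  have h1 : (0:Fin (ℓ+1)) ≠ i := hi.ne
  have h2 : (0:Fin (ℓ+1)) ≠ j := (hi.trans hij).ne
  simp [eform, h1, h2]

lemma eform_left (hi : 0 < i) (hij : i < j) : eform ℓ i j ε i = 1 := by
  simp [eform, hij.ne, hi.ne']

lemma eform_right (hi : 0 < i) (hij : i < j) : eform ℓ i j ε j = -1 := by
  simp [eform, hij.ne', (hi.trans hij).ne']

lemma eform_other {k} (hk0 : k ≠ 0) (hki : k ≠ i) (hkj : k ≠ j) : eform ℓ i j ε k = 0 := by
  simp [eform, hk0, hki, hkj]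

lemma mem_forms_iff {f : Fin (ℓ+1) → ℂ} : f ∈ coneSemiorderForms ℓ ↔
    (f = coneForm ℓ ∨ ∃ i j : Fin (ℓ+1), ∃ ε : ℂ,
      0 < i ∧ i < j ∧ (ε = 1 ∨ ε = -1) ∧ f = eform ℓ i j ε) := by
  constructor
  · rintro (rfl | ⟨i, j, hi, hij, rfl | rfl⟩)
    · exact Or.inl rfl
    · exact Or.inr ⟨i, j, 1, hi, hij, Or.inl rfl, formPlus_eq i j⟩
    · exact Or.inr ⟨i, j, -1, hi, hij, Or.inr rfl, formMinus_eq i j⟩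
  · rintro (rfl | ⟨i, j, ε, hi, hij, rfl | rfl, rfl⟩)
    · exact Or.inl rfl
    · exact Or.inr ⟨i, j, hi, hij, Or.inl (formPlus_eq i j).symm⟩
    · exact Or.inr ⟨i, j, hi, hij, Or.inr (formMinus_eq i j).symm⟩

lemma eform_ne_cone (hi : 0 < i) (hij : i < j) : eform ℓ i j ε ≠ coneForm ℓ := by
  intro h
  have h1 := congrFun h i
  rw [eform_left hi hij, coneForm_ne hi.ne'] at h1
  exact one_ne_zero h1

lemma eform_inj (hi : 0 < i) (hij : i < j) (hi' : 0 < i') (hij' : i' < j')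
    (h : eform ℓ i j ε = eform ℓ i' j' ε') : i = i' ∧ j = j' ∧ ε = ε' := by
  have hii : i = i' := by
    by_contra hne
    have h1 := congrFun h i
    rw [eform_left hi hij] at h1
    by_cases hij'' : i = j'
    · rw [hij'', eform_right hi' hij'] at h1; norm_num at h1
    · rw [eform_other hi.ne' hne hij''] at h1; exact one_ne_zero h1
  subst hii
  have hjj : j = j' := by
    by_contra hne
    have h1 := congrFun h j
    rw [eform_right hi hij, eform_other (hi.trans hij).ne' hij.ne' hne] at h1
    norm_num at h1
  subst hjj
  have h0 := congrFun h 0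
  rw [eform_zero hi hij, eform_zero hi' hij'] at h0
  exact ⟨rfl, rfl, h0⟩

lemma pair_det {n : ℕ} {i j i' j' : Fin n} (hij : i < j) (hij' : i' < j')
    (h1 : i = i' ∨ i = j') (h2 : j = i' ∨ j = j') : i = i' ∧ j = j' := by
  rcases h1 with h1 | h1
  · subst h1
    rcases h2 with h2 | h2
    · exact absurd hij (by rw [h2]; exact lt_irrefl _)
    · exact ⟨rfl, h2⟩
  · exfalso
    subst h1
    rcases h2 with h2 | h2
    · subst h2; exact lt_asymm hij hij'
    · exact hij.ne' h2

lemma pair_zero {a b : Fin (ℓ+1) → ℂ} (ha : a ∈ coneSemiorderForms ℓ)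
    (hb : b ∈ coneSemiorderForms ℓ) (hab : a ≠ b) {α β : ℂ}
    (h : ∀ k, α * a k + β * b k = 0) : α = 0 ∧ β = 0 := by
  rcases mem_forms_iff.1 ha with rfl | ⟨i, j, ε, hi, hij, hε, rfl⟩
  · rcases mem_forms_iff.1 hb with rfl | ⟨i', j', ε', hi', hij', hε', rfl⟩
    · exact absurd rfl hab
    · have h1 := h i'
      rw [coneForm_ne hi'.ne', eform_left hi' hij'] at h1
      have hβ : β = 0 := by simpa using h1
      have h0 := h 0
      rw [coneForm_zero, eform_zero hi' hij', hβ] at h0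
      exact ⟨by simpa using h0, hβ⟩
  · rcases mem_forms_iff.1 hb with rfl | ⟨i', j', ε', hi', hij', hε', rfl⟩
    · have h1 := h i
      rw [coneForm_ne hi.ne', eform_left hi hij] at h1
      have hα : α = 0 := by simpa using h1
      have h0 := h 0
      rw [coneForm_zero, eform_zero hi hij, hα] at h0
      exact ⟨hα, by simpa using h0⟩
    · by_cases hii : i = i'
      · subst hii
        by_cases hjj : j = j'
        · subst hjj
          have hεε : ε ≠ ε' := fun he => hab (by rw [he])
          have h1 := h i
          rw [eform_left hi hij, eform_left hi hij'] at h1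
          have h0 := h 0
          rw [eform_zero hi hij, eform_zero hi hij'] at h0
          have hβ : β = 0 := by
            have hb2 : β * (ε' - ε) = 0 := by linear_combination h0 - ε * h1
            rcases mul_eq_zero.1 hb2 with hb3 | hb3
            · exact hb3
            · exact absurd (sub_eq_zero.1 hb3).symm hεε
          refine ⟨?_, hβ⟩
          rw [hβ] at h1; simpa using h1
        · have h1 := h j
          rw [eform_right hi hij, eform_other (hi.trans hij).ne' hij.ne' hjj] at h1
          have hα : α = 0 := by linear_combination -h1
          have h2 := h i
          rw [eform_left hi hij, eform_left hi hij', hα] at h2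
          exact ⟨hα, by simpa using h2⟩
      · by_cases hij'' : i = j'
        · have hi'j : i' ≠ j := ((hij'' ▸ hij').trans hij).ne
          have h1 := h i'
          rw [eform_other hi'.ne' (Ne.symm hii) hi'j, eform_left hi' hij'] at h1
          have hβ : β = 0 := by simpa using h1
          have h2 := h i
          rw [eform_left hi hij, hβ] at h2
          exact ⟨by simpa using h2, hβ⟩
        · have h1 := h i
          rw [eform_left hi hij, eform_other hi.ne' hii hij''] at h1
          have hα : α = 0 := by simpa using h1
          have h2 := h i'
          rw [eform_left hi' hij', hα] at h2
          exact ⟨hα, by simpa using h2⟩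

lemma cone_case (hi : 0 < i) (hij : i < j) (hi' : 0 < i') (hij' : i' < j') {g0 g1 g2 : ℂ}
    (hg1 : g1 ≠ 0) (hg2 : g2 ≠ 0)
    (h : ∀ k, g0 * coneForm ℓ k + g1 * eform ℓ i j ε k + g2 * eform ℓ i' j' ε' k = 0) :
    i = i' ∧ j = j' := by
  have m1 : i = i' ∨ i = j' := by
    by_contra hc; push_neg at hc
    have h1 := h i
    rw [coneForm_ne hi.ne', eform_left hi hij, eform_other hi.ne' hc.1 hc.2] at h1
    exact hg1 (by linear_combination h1)
  have m2 : j = i' ∨ j = j' := by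
    by_contra hc; push_neg at hc
    have h1 := h j
    rw [coneForm_ne (hi.trans hij).ne', eform_right hi hij,
      eform_other (hi.trans hij).ne' hc.1 hc.2] at h1
    exact hg1 (by linear_combination -h1)
  exact pair_det hij hij' m1 m2

lemma same_edge_case (hi : 0 < i) (hij : i < j) (hi' : 0 < i') (hij' : i' < j')
    {ε1 ε2 ε3 g1 g2 g3 : ℂ} (hg3 : g3 ≠ 0) (hne : ¬(i' = i ∧ j' = j))
    (h : ∀ k, g1 * eform ℓ i j ε1 k + g2 * eform ℓ i j ε2 k + g3 * eform ℓ i' j' ε3 k = 0) :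
    False := by
  have m1 : i' = i ∨ i' = j := by
    by_contra hc; push_neg at hc
    have h1 := h i'
    rw [eform_other hi'.ne' hc.1 hc.2, eform_other hi'.ne' hc.1 hc.2,
      eform_left hi' hij'] at h1
    exact hg3 (by linear_combination h1)
  have m2 : j' = i ∨ j' = j := by
    by_contra hc; push_neg at hc
    have h1 := h j'
    rw [eform_other (hi'.trans hij').ne' hc.1 hc.2, eform_other (hi'.trans hij').ne' hc.1 hc.2,
      eform_right hi' hij'] at h1
    exact hg3 (by linear_combination -h1)
  exact hne (pair_det hij' hij m1 m2)

lemma tri_sub {i j1 j2 i3 j3 : Fin (ℓ+1)} (hi : 0 < i) (hij1 : i < j1) (hij2 : i < j2)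
    (hi3 : 0 < i3) (hij3 : i3 < j3) (hii3 : i < i3) (hj12 : j1 ≠ j2)
    {ε1 ε2 ε3 g1 g2 g3 : ℂ}
    (hε1 : ε1 = 1 ∨ ε1 = -1) (hε2 : ε2 = 1 ∨ ε2 = -1) (hε3 : ε3 = 1 ∨ ε3 = -1)
    (hg1 : g1 ≠ 0)
    (h : ∀ k, g1 * eform ℓ i j1 ε1 k + g2 * eform ℓ i j2 ε2 k + g3 * eform ℓ i3 j3 ε3 k = 0) :
    False := by
  have hA : g1 + g2 = 0 := by
    have h1 := h i
    rw [eform_left hi hij1, eform_left hi hij2,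
      eform_other hi.ne' hii3.ne (hii3.trans hij3).ne] at h1
    linear_combination h1
  have hg2 : g2 ≠ 0 := by
    intro h0; rw [h0, add_zero] at hA; exact hg1 hA
  have m1 : j1 = i3 ∨ j1 = j3 := by
    by_contra hc; push_neg at hc
    have h1 := h j1
    rw [eform_right hi hij1, eform_other (hi.trans hij1).ne' hij1.ne' hj12,
      eform_other (hi.trans hij1).ne' hc.1 hc.2] at h1
    exact hg1 (by linear_combination -h1)
  have m2 : j2 = i3 ∨ j2 = j3 := by
    by_contra hc; push_neg at hc
    have h1 := h j2
    rw [eform_other (hi.trans hij2).ne' hij2.ne' (Ne.symm hj12), eform_right hi hij2,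
      eform_other (hi.trans hij2).ne' hc.1 hc.2] at h1
    exact hg2 (by linear_combination -h1)
  have e0 := h 0
  rw [eform_zero hi hij1, eform_zero hi hij2, eform_zero hi3 hij3] at e0
  rcases m1 with m1 | m1 <;> rcases m2 with m2 | m2
  · exact hj12 (m1.trans m2.symm)
  · -- j1 = i3, j2 = j3
    have e1 := h j1
    rw [eform_right hi hij1, eform_other (hi.trans hij1).ne' hij1.ne' hj12, m1,
      eform_left hi3 hij3] at e1
    have hstep : g1 * (ε1 - ε2 + ε3) = 0 := by linear_combination e0 - ε2 * hA - ε3 * e1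
    have hz : ε1 - ε2 + ε3 = 0 := (mul_eq_zero.1 hstep).resolve_left hg1
    rcases hε1 with rfl | rfl <;> rcases hε2 with rfl | rfl <;> rcases hε3 with rfl | rfl <;>
      norm_num at hz
  · -- j1 = j3, j2 = i3
    have e1 := h j1
    rw [eform_right hi hij1, eform_other (hi.trans hij1).ne' hij1.ne' hj12, m1,
      eform_right hi3 hij3] at e1
    have hstep : g1 * (ε1 - ε2 - ε3) = 0 := by linear_combination e0 - ε2 * hA + ε3 * e1
    have hz : ε1 - ε2 - ε3 = 0 := (mul_eq_zero.1 hstep).resolve_left hg1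
    rcases hε1 with rfl | rfl <;> rcases hε2 with rfl | rfl <;> rcases hε3 with rfl | rfl <;>
      norm_num at hz
  · exact hj12 (m1.trans m2.symm)

lemma tri_case {i1 j1 i2 j2 i3 j3 : Fin (ℓ+1)} (h01 : 0 < i1) (h1 : i1 < j1)
    (h02 : 0 < i2) (h2 : i2 < j2) (h03 : 0 < i3) (h3 : i3 < j3)
    (hm2 : i1 ≤ i2) (hm3 : i1 ≤ i3)
    (hd12 : ¬(i1 = i2 ∧ j1 = j2)) (hd13 : ¬(i1 = i3 ∧ j1 = j3)) (hd23 : ¬(i2 = i3 ∧ j2 = j3))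
    {ε1 ε2 ε3 g1 g2 g3 : ℂ}
    (hε1 : ε1 = 1 ∨ ε1 = -1) (hε2 : ε2 = 1 ∨ ε2 = -1) (hε3 : ε3 = 1 ∨ ε3 = -1)
    (hg1 : g1 ≠ 0) (hg2 : g2 ≠ 0) (hg3 : g3 ≠ 0)
    (h : ∀ k, g1 * eform ℓ i1 j1 ε1 k + g2 * eform ℓ i2 j2 ε2 k + g3 * eform ℓ i3 j3 ε3 k = 0) :
    False := by
  by_cases e12 : i1 = i2
  · by_cases e13 : i1 = i3
    · -- all left endpoints equal; right endpoints pairwise distinct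
      subst e12; subst e13
      have hj12 : j1 ≠ j2 := fun hh => hd12 ⟨rfl, hh⟩
      have hj13 : j1 ≠ j3 := fun hh => hd13 ⟨rfl, hh⟩
      have hq := h j1
      rw [eform_right h01 h1, eform_other (h01.trans h1).ne' h1.ne' hj12,
        eform_other (h01.trans h1).ne' h1.ne' hj13] at hq
      exact hg1 (by linear_combination -hq)
    · subst e12
      have hii3 : i1 < i3 := lt_of_le_of_ne hm3 e13
      exact tri_sub h01 h1 h2 h03 h3 hii3 (fun hh => hd12 ⟨rfl, hh⟩) hε1 hε2 hε3 hg1 h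
  · by_cases e13 : i1 = i3
    · subst e13
      have hii2 : i1 < i2 := lt_of_le_of_ne hm2 e12
      have h' : ∀ k, g1 * eform ℓ i1 j1 ε1 k + g3 * eform ℓ i1 j3 ε3 k
          + g2 * eform ℓ i2 j2 ε2 k = 0 := fun k => by linear_combination h k
      exact tri_sub h01 h1 h3 h02 h2 hii2 (fun hh => hd13 ⟨rfl, hh⟩) hε1 hε3 hε2 hg1 h'
    · have hii2 : i1 < i2 := lt_of_le_of_ne hm2 e12
      have hii3 : i1 < i3 := lt_of_le_of_ne hm3 e13
      have hq := h i1
      rw [eform_left h01 h1, eform_other h01.ne' hii2.ne (hii2.trans h2).ne,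
        eform_other h01.ne' hii3.ne (hii3.trans h3).ne] at hq
      exact hg1 (by linear_combination hq)

lemma no_cone {i1 j1 i2 j2 i3 j3 : Fin (ℓ+1)} (h01 : 0 < i1) (h1 : i1 < j1)
    (h02 : 0 < i2) (h2 : i2 < j2) (h03 : 0 < i3) (h3 : i3 < j3)
    {ε1 ε2 ε3 g1 g2 g3 : ℂ}
    (hε1 : ε1 = 1 ∨ ε1 = -1) (hε2 : ε2 = 1 ∨ ε2 = -1) (hε3 : ε3 = 1 ∨ ε3 = -1)
    (hab : eform ℓ i1 j1 ε1 ≠ eform ℓ i2 j2 ε2)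
    (hac : eform ℓ i1 j1 ε1 ≠ eform ℓ i3 j3 ε3)
    (hbc : eform ℓ i2 j2 ε2 ≠ eform ℓ i3 j3 ε3)
    (hg1 : g1 ≠ 0) (hg2 : g2 ≠ 0) (hg3 : g3 ≠ 0)
    (h : ∀ k, g1 * eform ℓ i1 j1 ε1 k + g2 * eform ℓ i2 j2 ε2 k + g3 * eform ℓ i3 j3 ε3 k = 0) :
    False := by
  by_cases p12 : i1 = i2 ∧ j1 = j2
  · obtain ⟨f1, f2⟩ := p12; subst f1; subst f2
    have p13 : ¬(i3 = i1 ∧ j3 = j1) := by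
      rintro ⟨f1, f2⟩; subst f1; subst f2
      have hε12 : ε1 ≠ ε2 := fun he => hab (by rw [he])
      rcases hε1 with rfl | rfl <;> rcases hε2 with rfl | rfl <;> rcases hε3 with rfl | rfl <;>
        first
          | exact hε12 rfl
          | exact hac rfl
          | exact hbc rfl
    exact same_edge_case h01 h1 h03 h3 hg3 p13 h
  · by_cases p13 : i1 = i3 ∧ j1 = j3
    · obtain ⟨f1, f2⟩ := p13; subst f1; subst f2
      have p2 : ¬(i2 = i1 ∧ j2 = j1) := fun ⟨f1, f2⟩ => p12 ⟨f1.symm, f2.symm⟩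
      have h' : ∀ k, g1 * eform ℓ i1 j1 ε1 k + g3 * eform ℓ i1 j1 ε3 k
          + g2 * eform ℓ i2 j2 ε2 k = 0 := fun k => by linear_combination h k
      exact same_edge_case h01 h1 h02 h2 hg2 p2 h'
    · by_cases p23 : i2 = i3 ∧ j2 = j3
      · obtain ⟨f1, f2⟩ := p23; subst f1; subst f2
        have h' : ∀ k, g2 * eform ℓ i2 j2 ε2 k + g3 * eform ℓ i2 j2 ε3 k
            + g1 * eform ℓ i1 j1 ε1 k = 0 := fun k => by linear_combination h k
        exact same_edge_case h02 h2 h01 h1 hg1 p12 h'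
      · rcases le_total i1 i2 with l12 | l12
        · rcases le_total i1 i3 with l13 | l13
          · exact tri_case h01 h1 h02 h2 h03 h3 l12 l13 p12 p13 p23 hε1 hε2 hε3 hg1 hg2 hg3 h
          · have h' : ∀ k, g3 * eform ℓ i3 j3 ε3 k + g1 * eform ℓ i1 j1 ε1 k
                + g2 * eform ℓ i2 j2 ε2 k = 0 := fun k => by linear_combination h k
            exact tri_case h03 h3 h01 h1 h02 h2 l13 (l13.trans l12)
              (fun ⟨f1, f2⟩ => p13 ⟨f1.symm, f2.symm⟩)
              (fun ⟨f1, f2⟩ => p23 ⟨f1.symm, f2.symm⟩) p12 hε3 hε1 hε2 hg3 hg1 hg2 h'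
        · rcases le_total i2 i3 with l23 | l23
          · have h' : ∀ k, g2 * eform ℓ i2 j2 ε2 k + g1 * eform ℓ i1 j1 ε1 k
                + g3 * eform ℓ i3 j3 ε3 k = 0 := fun k => by linear_combination h k
            exact tri_case h02 h2 h01 h1 h03 h3 l12 l23
              (fun ⟨f1, f2⟩ => p12 ⟨f1.symm, f2.symm⟩) p23 p13 hε2 hε1 hε3 hg2 hg1 hg3 h'
          · have h' : ∀ k, g3 * eform ℓ i3 j3 ε3 k + g1 * eform ℓ i1 j1 ε1 k
                + g2 * eform ℓ i2 j2 ε2 k = 0 := fun k => by linear_combination h k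
            exact tri_case h03 h3 h01 h1 h02 h2 (l23.trans l12) l23
              (fun ⟨f1, f2⟩ => p13 ⟨f1.symm, f2.symm⟩)
              (fun ⟨f1, f2⟩ => p23 ⟨f1.symm, f2.symm⟩) p12 hε3 hε1 hε2 hg3 hg1 hg2 h'

lemma plus_ne_minus (hi : 0 < i) (hij : i < j) : formPlus ℓ i j ≠ formMinus ℓ i j := by
  rw [formPlus_eq, formMinus_eq]
  intro hcon
  have := (eform_inj hi hij hi hij hcon).2.2
  norm_num at this

lemma key {a b c : Fin (ℓ+1) → ℂ} (ha : a ∈ coneSemiorderForms ℓ)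
    (hb : b ∈ coneSemiorderForms ℓ) (hc : c ∈ coneSemiorderForms ℓ)
    (hab : a ≠ b) (hac : a ≠ c) (hbc : b ≠ c) {g0 g1 g2 : ℂ}
    (h : ∀ k, g0 * a k + g1 * b k + g2 * c k = 0) (hg : ¬(g0 = 0 ∧ g1 = 0 ∧ g2 = 0)) :
    ∃ i j : Fin (ℓ+1), 0 < i ∧ i < j ∧
      ({a, b, c} : Set (Fin (ℓ+1) → ℂ)) = {coneForm ℓ, formPlus ℓ i j, formMinus ℓ i j} := by
  have hg0 : g0 ≠ 0 := by
    intro h0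
    have hp := pair_zero hb hc hbc (α := g1) (β := g2)
      (fun k => by have hk := h k; rw [h0] at hk; linear_combination hk)
    exact hg ⟨h0, hp.1, hp.2⟩
  have hg1 : g1 ≠ 0 := by
    intro h0
    have hp := pair_zero ha hc hac (α := g0) (β := g2)
      (fun k => by have hk := h k; rw [h0] at hk; linear_combination hk)
    exact hg ⟨hp.1, h0, hp.2⟩
  have hg2 : g2 ≠ 0 := by
    intro h0
    have hp := pair_zero ha hb hab (α := g0) (β := g1)
      (fun k => by have hk := h k; rw [h0] at hk; linear_combination hk)
    exact hg ⟨hp.1, hp.2, h0⟩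
  rcases mem_forms_iff.1 ha with rfl | ⟨i1, j1, ε1, hi1, hij1, hε1, rfl⟩
  · -- a = cone
    rcases mem_forms_iff.1 hb with rfl | ⟨i2, j2, ε2, hi2, hij2, hε2, rfl⟩
    · exact absurd rfl hab
    rcases mem_forms_iff.1 hc with rfl | ⟨i3, j3, ε3, hi3, hij3, hε3, rfl⟩
    · exact absurd rfl hac
    obtain ⟨f1, f2⟩ := cone_case hi2 hij2 hi3 hij3 hg1 hg2 h
    subst f1; subst f2
    refine ⟨i2, j2, hi2, hij2, ?_⟩
    have hεε : ε2 ≠ ε3 := fun he => hbc (by rw [he])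
    rcases hε2 with rfl | rfl <;> rcases hε3 with rfl | rfl
    · exact absurd rfl hεε
    · rw [formPlus_eq, formMinus_eq]
    · rw [formPlus_eq, formMinus_eq, Set.pair_comm (eform ℓ i2 j2 (-1))]
    · exact absurd rfl hεε
  · rcases mem_forms_iff.1 hb with rfl | ⟨i2, j2, ε2, hi2, hij2, hε2, rfl⟩
    · -- b = cone
      rcases mem_forms_iff.1 hc with rfl | ⟨i3, j3, ε3, hi3, hij3, hε3, rfl⟩
      · exact absurd rfl hbc
      have h' : ∀ k, g1 * coneForm ℓ k + g0 * eform ℓ i1 j1 ε1 k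
          + g2 * eform ℓ i3 j3 ε3 k = 0 := fun k => by linear_combination h k
      obtain ⟨f1, f2⟩ := cone_case hi1 hij1 hi3 hij3 hg0 hg2 h'
      subst f1; subst f2
      refine ⟨i1, j1, hi1, hij1, ?_⟩
      have hεε : ε1 ≠ ε3 := fun he => hac (by rw [he])
      have hcomm : ({eform ℓ i1 j1 ε1, coneForm ℓ, eform ℓ i1 j1 ε3} :
          Set (Fin (ℓ+1) → ℂ)) = {coneForm ℓ, eform ℓ i1 j1 ε1, eform ℓ i1 j1 ε3} :=
        Set.insert_comm _ _ _
      rw [hcomm]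
      rcases hε1 with rfl | rfl <;> rcases hε3 with rfl | rfl
      · exact absurd rfl hεε
      · rw [formPlus_eq, formMinus_eq]
      · rw [formPlus_eq, formMinus_eq, Set.pair_comm (eform ℓ i1 j1 (-1))]
      · exact absurd rfl hεε
    · rcases mem_forms_iff.1 hc with rfl | ⟨i3, j3, ε3, hi3, hij3, hε3, rfl⟩
      · -- c = cone
        have h' : ∀ k, g2 * coneForm ℓ k + g0 * eform ℓ i1 j1 ε1 k
            + g1 * eform ℓ i2 j2 ε2 k = 0 := fun k => by linear_combination h k
        obtain ⟨f1, f2⟩ := cone_case hi1 hij1 hi2 hij2 hg0 hg1 h'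
        subst f1; subst f2
        refine ⟨i1, j1, hi1, hij1, ?_⟩
        have hεε : ε1 ≠ ε2 := fun he => hab (by rw [he])
        have hcomm : ({eform ℓ i1 j1 ε1, eform ℓ i1 j1 ε2, coneForm ℓ} :
            Set (Fin (ℓ+1) → ℂ)) = {coneForm ℓ, eform ℓ i1 j1 ε1, eform ℓ i1 j1 ε2} := by
          ext x
          simp only [Set.mem_insert_iff, Set.mem_singleton_iff]
          tauto
        rw [hcomm]
        rcases hε1 with rfl | rfl <;> rcases hε2 with rfl | rfl
        · exact absurd rfl hεε
        · rw [formPlus_eq, formMinus_eq]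
        · rw [formPlus_eq, formMinus_eq, Set.pair_comm (eform ℓ i1 j1 (-1))]
        · exact absurd rfl hεε
      · exact absurd (no_cone hi1 hij1 hi2 hij2 hi3 hij3 hε1 hε2 hε3 hab hac hbc
          hg0 hg1 hg2 h) not_false

lemma dep_rel (i j : Fin (ℓ+1)) :
    (2:ℂ) • coneForm ℓ + (-1:ℂ) • formPlus ℓ i j + (1:ℂ) • formMinus ℓ i j = 0 := by
  funext k
  simp [coneForm, formPlus, formMinus, Pi.smul_apply, Pi.add_apply, Pi.sub_apply, smul_eq_mul]
  ring

lemma main_iff {a b c : Fin (ℓ+1) → ℂ} (ha : a ∈ coneSemiorderForms ℓ)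
    (hb : b ∈ coneSemiorderForms ℓ) (hc : c ∈ coneSemiorderForms ℓ)
    (hab : a ≠ b) (hac : a ≠ c) (hbc : b ≠ c) :
    ¬LinearIndependent ℂ ![a, b, c] ↔
      ∃ i j : Fin (ℓ + 1), 0 < i ∧ i < j ∧
        ({a, b, c} : Set (Fin (ℓ + 1) → ℂ)) =
          {coneForm ℓ, formPlus ℓ i j, formMinus ℓ i j} := by
  constructor
  · intro hLI
    rw [Fintype.not_linearIndependent_iff] at hLI
    obtain ⟨g, hsum, idx, hne⟩ := hLI
    rw [Fin.sum_univ_three] at hsum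
    simp only [Matrix.cons_val_zero, Matrix.cons_val_one, Matrix.head_cons,
      Matrix.cons_val_two, Matrix.tail_cons] at hsum
    refine key ha hb hc hab hac hbc (g0 := g 0) (g1 := g 1) (g2 := g 2)
      (fun k => by have := congrFun hsum k; simpa using this) ?_
    rintro ⟨z0, z1, z2⟩
    fin_cases idx
    exacts [hne z0, hne z1, hne z2]
  · rintro ⟨i, j, hi, hij, hset⟩
    rw [Fintype.not_linearIndependent_iff]
    have ha' : a = coneForm ℓ ∨ a = formPlus ℓ i j ∨ a = formMinus ℓ i j := by
      have : a ∈ ({coneForm ℓ, formPlus ℓ i j, formMinus ℓ i j} :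
          Set (Fin (ℓ+1) → ℂ)) := by rw [← hset]; simp
      simpa using this
    have hb' : b = coneForm ℓ ∨ b = formPlus ℓ i j ∨ b = formMinus ℓ i j := by
      have : b ∈ ({coneForm ℓ, formPlus ℓ i j, formMinus ℓ i j} :
          Set (Fin (ℓ+1) → ℂ)) := by rw [← hset]; simp
      simpa using this
    have hc' : c = coneForm ℓ ∨ c = formPlus ℓ i j ∨ c = formMinus ℓ i j := by
      have : c ∈ ({coneForm ℓ, formPlus ℓ i j, formMinus ℓ i j} :
          Set (Fin (ℓ+1) → ℂ)) := by rw [← hset]; simp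
      simpa using this
    rcases ha' with rfl | rfl | rfl <;> rcases hb' with rfl | rfl | rfl <;>
      rcases hc' with rfl | rfl | rfl <;>
      first
        | exact absurd rfl hab
        | exact absurd rfl hac
        | exact absurd rfl hbc
        | (refine ⟨![2, -1, 1], ?_, 0, by norm_num⟩
           rw [Fin.sum_univ_three]
           simp only [Matrix.cons_val_zero, Matrix.cons_val_one, Matrix.head_cons,
             Matrix.cons_val_two, Matrix.tail_cons]
           funext k
           simp [coneForm, formPlus, formMinus, Pi.smul_apply, Pi.add_apply, Pi.sub_apply,
             smul_eq_mul]
           ring1)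
        | (refine ⟨![2, 1, -1], ?_, 0, by norm_num⟩
           rw [Fin.sum_univ_three]
           simp only [Matrix.cons_val_zero, Matrix.cons_val_one, Matrix.head_cons,
             Matrix.cons_val_two, Matrix.tail_cons]
           funext k
           simp [coneForm, formPlus, formMinus, Pi.smul_apply, Pi.add_apply, Pi.sub_apply,
             smul_eq_mul]
           ring1)
        | (refine ⟨![-1, 2, 1], ?_, 1, by norm_num⟩
           rw [Fin.sum_univ_three]
           simp only [Matrix.cons_val_zero, Matrix.cons_val_one, Matrix.head_cons,
             Matrix.cons_val_two, Matrix.tail_cons]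
           funext k
           simp [coneForm, formPlus, formMinus, Pi.smul_apply, Pi.add_apply, Pi.sub_apply,
             smul_eq_mul]
           ring1)
        | (refine ⟨![1, 2, -1], ?_, 1, by norm_num⟩
           rw [Fin.sum_univ_three]
           simp only [Matrix.cons_val_zero, Matrix.cons_val_one, Matrix.head_cons,
             Matrix.cons_val_two, Matrix.tail_cons]
           funext k
           simp [coneForm, formPlus, formMinus, Pi.smul_apply, Pi.add_apply, Pi.sub_apply,
             smul_eq_mul]
           ring1)
        | (refine ⟨![-1, 1, 2], ?_, 2, by simp⟩
           rw [Fin.sum_univ_three]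
           simp only [Matrix.cons_val_zero, Matrix.cons_val_one, Matrix.head_cons,
             Matrix.cons_val_two, Matrix.tail_cons]
           funext k
           simp [coneForm, formPlus, formMinus, Pi.smul_apply, Pi.add_apply, Pi.sub_apply,
             smul_eq_mul]
           ring1)
        | (refine ⟨![1, -1, 2], ?_, 2, by simp⟩
           rw [Fin.sum_univ_three]
           simp only [Matrix.cons_val_zero, Matrix.cons_val_one, Matrix.head_cons,
             Matrix.cons_val_two, Matrix.tail_cons]
           funext k
           simp [coneForm, formPlus, formMinus, Pi.smul_apply, Pi.add_apply, Pi.sub_apply,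
             smul_eq_mul]
           ring1)

lemma cone_ne_plus (hi : 0 < i) (hij : i < j) : coneForm ℓ ≠ formPlus ℓ i j := by
  rw [formPlus_eq]; exact (eform_ne_cone hi hij).symm

lemma cone_ne_minus (hi : 0 < i) (hij : i < j) : coneForm ℓ ≠ formMinus ℓ i j := by
  rw [formMinus_eq]; exact (eform_ne_cone hi hij).symm

lemma li_set_congr {s t : Set (Fin (ℓ+1) → ℂ)} (h : s = t) :
    LinearIndependent ℂ (fun x : s => (x : Fin (ℓ+1) → ℂ)) ↔
      LinearIndependent ℂ (fun x : t => (x : Fin (ℓ+1) → ℂ)) := by subst h; rfl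

lemma li_subtype_iff {a b c : Fin (ℓ+1) → ℂ} (hab : a ≠ b) (hac : a ≠ c) (hbc : b ≠ c) :
    LinearIndependent ℂ (fun x : ({a, b, c} : Set (Fin (ℓ+1) → ℂ)) => (x : Fin (ℓ+1) → ℂ)) ↔
      LinearIndependent ℂ ![a, b, c] := by
  have hinj : Function.Injective ![a, b, c] := by
    intro x y hxy
    fin_cases x <;> fin_cases y <;>
      simp_all [Matrix.cons_val_zero, Matrix.cons_val_one, Matrix.head_cons]
  have hrange : Set.range ![a, b, c] = {a, b, c} := by
    ext x
    constructor
    · rintro ⟨y, rfl⟩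
      fin_cases y <;> simp
    · rintro (rfl | rfl | rfl)
      exacts [⟨0, rfl⟩, ⟨1, rfl⟩, ⟨2, rfl⟩]
  rw [← linearIndepOn_id_range_iff hinj]
  exact li_set_congr hrange.symm

lemma notLI_triple (hi : 0 < i) (hij : i < j) :
    ¬LinearIndependent ℂ ![coneForm ℓ, formPlus ℓ i j, formMinus ℓ i j] := by
  rw [Fintype.not_linearIndependent_iff]
  refine ⟨![2, -1, 1], ?_, 0, by norm_num⟩
  rw [Fin.sum_univ_three]
  simp only [Matrix.cons_val_zero, Matrix.cons_val_one, Matrix.head_cons,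
    Matrix.cons_val_two, Matrix.tail_cons]
  funext k
  simp [coneForm, formPlus, formMinus, Pi.smul_apply, Pi.add_apply, Pi.sub_apply, smul_eq_mul]
  ring1

lemma pair_finset_det {n : ℕ} {i j i' j' : Fin n} (hij : i < j) (hij' : i' < j')
    (h : ({i, j} : Finset (Fin n)) = {i', j'}) : i = i' ∧ j = j' := by
  have h1 : i = i' ∨ i = j' := by
    have : i ∈ ({i', j'} : Finset (Fin n)) := h ▸ Finset.mem_insert_self i {j}
    simpa using this
  have h2 : j = i' ∨ j = j' := by
    have : j ∈ ({i', j'} : Finset (Fin n)) := by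
      rw [← h]; simp
    simpa using this
  exact pair_det hij hij' h1 h2

lemma card_pairs : (Finset.filter (fun p : Fin (ℓ+1) × Fin (ℓ+1) => 0 < p.1 ∧ p.1 < p.2)
    Finset.univ).card = ℓ.choose 2 := by
  have hcard : ((Finset.Ioi (0 : Fin (ℓ+1))).powersetCard 2).card = ℓ.choose 2 := by
    rw [Finset.card_powersetCard, Fin.card_Ioi]
    simp
  rw [← hcard]
  apply Finset.card_bij (fun p _ => ({p.1, p.2} : Finset (Fin (ℓ+1))))
  · intro p hp
    simp only [Finset.mem_filter] at hp
    obtain ⟨-, h0, hlt⟩ := hp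
    rw [Finset.mem_powersetCard]
    constructor
    · intro x hx
      simp only [Finset.mem_insert, Finset.mem_singleton] at hx
      rcases hx with rfl | rfl
      · exact Finset.mem_Ioi.2 h0
      · exact Finset.mem_Ioi.2 (h0.trans hlt)
    · exact Finset.card_pair hlt.ne
  · intro p hp q hq hpq
    simp only [Finset.mem_filter] at hp hq
    obtain ⟨h1, h2⟩ := pair_finset_det hp.2.2 hq.2.2 hpq
    exact Prod.ext h1 h2
  · intro s hs
    rw [Finset.mem_powersetCard] at hs
    obtain ⟨hsub, hcard2⟩ := hs
    obtain ⟨x, y, hxy, rfl⟩ := Finset.card_eq_two.1 hcard2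
    have hx : 0 < x := Finset.mem_Ioi.1 (hsub (by simp))
    have hy : 0 < y := Finset.mem_Ioi.1 (hsub (by simp))
    rcases lt_or_gt_of_ne hxy with hlt | hlt
    · exact ⟨(x, y), by simp [Finset.mem_filter, hx, hlt], rfl⟩
    · exact ⟨(y, x), by simp [Finset.mem_filter, hy, hlt], Finset.pair_comm y x⟩

end CSA

open CSA in
/-- Three distinct defining forms of the coned semiorder arrangement are linearly dependent
iff they are `x₀`, `x_i - x_j + x₀`, `x_i - x_j - x₀` for some `i < j`; in particular there
are exactly `C(ℓ,2)` dependent triples. -/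
theorem coneSemiorder_dependent_triples (ℓ : ℕ) (hℓ : 2 ≤ ℓ) :
    (∀ a b c : Fin (ℓ + 1) → ℂ,
      a ∈ coneSemiorderForms ℓ → b ∈ coneSemiorderForms ℓ → c ∈ coneSemiorderForms ℓ →
      a ≠ b → a ≠ c → b ≠ c →
      (¬LinearIndependent ℂ ![a, b, c] ↔
        ∃ i j : Fin (ℓ + 1), 0 < i ∧ i < j ∧
          ({a, b, c} : Set (Fin (ℓ + 1) → ℂ)) =
            {coneForm ℓ, formPlus ℓ i j, formMinus ℓ i j})) ∧
    {T : Finset (Fin (ℓ + 1) → ℂ) | (T : Set (Fin (ℓ + 1) → ℂ)) ⊆ coneSemiorderForms ℓ ∧ T.card = 3 ∧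
        ¬LinearIndependent ℂ (fun x : (T : Set (Fin (ℓ + 1) → ℂ)) => (x : Fin (ℓ + 1) → ℂ))}.ncard
      = ℓ.choose 2 := by
  classical
  constructor
  · intro a b c ha hb hc hab hac hbc
    exact main_iff ha hb hc hab hac hbc
  · have himg : {T : Finset (Fin (ℓ + 1) → ℂ) |
        (T : Set (Fin (ℓ + 1) → ℂ)) ⊆ coneSemiorderForms ℓ ∧ T.card = 3 ∧
        ¬LinearIndependent ℂ (fun x : (T : Set (Fin (ℓ + 1) → ℂ)) => (x : Fin (ℓ + 1) → ℂ))} =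
        (fun p : Fin (ℓ+1) × Fin (ℓ+1) =>
          ({coneForm ℓ, formPlus ℓ p.1 p.2, formMinus ℓ p.1 p.2} :
            Finset (Fin (ℓ+1) → ℂ))) '' {p | 0 < p.1 ∧ p.1 < p.2} := by
      ext T
      simp only [Set.mem_setOf_eq, Set.mem_image]
      constructor
      · rintro ⟨hsub, hcard, hLI⟩
        obtain ⟨a, b, c, hab, hac, hbc, rfl⟩ := Finset.card_eq_three.1 hcard
        have hcoe : ((({a, b, c} : Finset (Fin (ℓ+1) → ℂ))) : Set (Fin (ℓ+1) → ℂ))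
            = {a, b, c} := by simp
        have ha : a ∈ coneSemiorderForms ℓ := hsub (by simp)
        have hb : b ∈ coneSemiorderForms ℓ := hsub (by simp)
        have hc : c ∈ coneSemiorderForms ℓ := hsub (by simp)
        have hLI' : ¬ LinearIndependent ℂ ![a, b, c] := by
          rw [← li_subtype_iff hab hac hbc, ← li_set_congr hcoe]
          exact hLI
        obtain ⟨i, j, hi, hij, hset⟩ := (main_iff ha hb hc hab hac hbc).1 hLI'
        refine ⟨(i, j), ⟨hi, hij⟩, ?_⟩
        apply Finset.coe_injective
        simp only [Finset.coe_insert, Finset.coe_singleton]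
        exact hset.symm
      · rintro ⟨⟨i, j⟩, ⟨hi, hij⟩, rfl⟩
        refine ⟨?_, ?_, ?_⟩
        · intro x hx
          simp only [Finset.coe_insert, Finset.coe_singleton, Set.mem_insert_iff,
            Set.mem_singleton_iff] at hx
          rcases hx with rfl | rfl | rfl
          · exact Or.inl rfl
          · exact Or.inr ⟨i, j, hi, hij, Or.inl rfl⟩
          · exact Or.inr ⟨i, j, hi, hij, Or.inr rfl⟩
        · exact Finset.card_eq_three.2 ⟨_, _, _, cone_ne_plus hi hij, cone_ne_minus hi hij,
            plus_ne_minus hi hij, rfl⟩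
        · have hcoe : ((({coneForm ℓ, formPlus ℓ i j, formMinus ℓ i j} :
              Finset (Fin (ℓ+1) → ℂ))) : Set (Fin (ℓ+1) → ℂ))
              = {coneForm ℓ, formPlus ℓ i j, formMinus ℓ i j} := by simp
          rw [li_set_congr hcoe, li_subtype_iff (cone_ne_plus hi hij)
            (cone_ne_minus hi hij) (plus_ne_minus hi hij)]
          exact notLI_triple hi hij
    rw [himg]
    have hinj : Set.InjOn (fun p : Fin (ℓ+1) × Fin (ℓ+1) =>
        ({coneForm ℓ, formPlus ℓ p.1 p.2, formMinus ℓ p.1 p.2} : Finset (Fin (ℓ+1) → ℂ)))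
        {p | 0 < p.1 ∧ p.1 < p.2} := by
      rintro ⟨i, j⟩ ⟨hi, hij⟩ ⟨i', j'⟩ ⟨hi', hij'⟩ heq
      simp only at heq hi hij hi' hij' ⊢
      have hsets : ({coneForm ℓ, formPlus ℓ i j, formMinus ℓ i j} : Set (Fin (ℓ+1) → ℂ))
          = {coneForm ℓ, formPlus ℓ i' j', formMinus ℓ i' j'} := by
        have := congrArg (fun (s : Finset (Fin (ℓ+1) → ℂ)) => (s : Set (Fin (ℓ+1) → ℂ))) heq
        simpa using this
      have hp : formPlus ℓ i j ∈ ({coneForm ℓ, formPlus ℓ i' j', formMinus ℓ i' j'} :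
          Set (Fin (ℓ+1) → ℂ)) := by rw [← hsets]; simp
      simp only [Set.mem_insert_iff, Set.mem_singleton_iff] at hp
      rcases hp with h | h | h
      · exact absurd h.symm (cone_ne_plus hi hij)
      · rw [formPlus_eq, formPlus_eq] at h
        obtain ⟨h1, h2, -⟩ := eform_inj hi hij hi' hij' h
        exact Prod.ext h1 h2
      · rw [formPlus_eq, formMinus_eq] at h
        have := (eform_inj hi hij hi' hij' h).2.2
        norm_num at this
    rw [Set.ncard_image_of_injOn hinj]
    have hPfin : {p : Fin (ℓ+1) × Fin (ℓ+1) | 0 < p.1 ∧ p.1 < p.2} =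
        ↑(Finset.filter (fun p : Fin (ℓ+1) × Fin (ℓ+1) => 0 < p.1 ∧ p.1 < p.2) Finset.univ) := by
      ext p; simp
    rw [hPfin, Set.ncard_coe_finset, card_pairs]
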